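/- Let θ ∈ (1/2, 1), α > 0, and let σ : [t', ∞) → (0, ∞) be differentiable satisfying σ'(t) ≤ -α·t·σ(t)^{θ/(1-θ)} for all t ≥ t'. Then there exist a₃, a₄ > 0 such that σ(t) ≤ (a₃ t² + a₄)^{-(1-θ)/(2θ-1)} for all t ≥ t'. -/

import Mathlib

set_option maxHeartbeats 800000


/-- Polynomial-rate step for Łojasiewicz exponent `θ ∈ (1/2,1)`: if `σ > 0` is
differentiable with `σ'(t) ≤ -α t σ(t)^{θ/(1-θ)}`, then
`σ(t) ≤ (a₃ t² + a₄)^{-(1-θ)/(2θ-1)}` for some `a₃, a₄ > 0`. -/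
theorem stmt_12 (θ t' α : ℝ) (hθ₁ : 1 / 2 < θ) (hθ₂ : θ < 1) (ht' : 0 < t') (hα : 0 < α)
    (σ σ' : ℝ → ℝ)
    (hpos : ∀ t ≥ t', 0 < σ t)
    (hderiv : ∀ t ≥ t', HasDerivAt σ (σ' t) t)
    (hineq : ∀ t ≥ t', σ' t ≤ -α * t * (σ t) ^ (θ / (1 - θ))) :
    ∃ a₃ > (0:ℝ), ∃ a₄ > (0:ℝ), ∀ t ≥ t',
      σ t ≤ (a₃ * t ^ 2 + a₄) ^ (-((1 - θ) / (2 * θ - 1))) := by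
  have h1θ : 0 < 1 - θ := by linarith
  set p : ℝ := (1 - 2*θ) / (1 - θ) with hp
  have hpneg : p < 0 := div_neg_of_neg_of_pos (by linarith) h1θ
  have hpne : p ≠ 0 := ne_of_lt hpneg
  set c : ℝ := -p * α with hc
  have hcpos : 0 < c := mul_pos (neg_pos.2 hpneg) hα
  set g : ℝ → ℝ := fun t => σ t ^ p with hg
  have hgpos : ∀ t ≥ t', 0 < g t := fun t ht => Real.rpow_pos_of_pos (hpos t ht) p
  set h : ℝ → ℝ := fun t => g t - c/2 * t^2 with hh
  have hdh : ∀ t ≥ t', HasDerivAt h (σ' t * p * σ t ^ (p-1) - c * t) t := by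
    intro t ht
    have h1 : HasDerivAt g (σ' t * p * σ t ^ (p-1)) t :=
      (hderiv t ht).rpow_const (Or.inl (ne_of_gt (hpos t ht)))
    have h2 : HasDerivAt (fun s : ℝ => c/2 * s^2) (c * t) t := by
      have := (hasDerivAt_pow 2 t).const_mul (c/2)
      exact this.congr_deriv (by simp; ring)
    exact h1.sub h2
  have hderiv_nonneg : ∀ t ≥ t', 0 ≤ σ' t * p * σ t ^ (p-1) - c * t := by
    intro t ht
    have htpos : 0 < t := lt_of_lt_of_le ht' ht
    have hσ := hpos t ht
    have hkey : σ t ^ (θ / (1 - θ)) * σ t ^ (p - 1) = 1 := by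
      rw [← Real.rpow_add hσ]
      have : θ / (1 - θ) + (p - 1) = 0 := by
        rw [hp]; field_simp; ring
      rw [this, Real.rpow_zero]
    have h1 : p * σ' t ≥ p * (-α * t * σ t ^ (θ / (1 - θ))) :=
      mul_le_mul_of_nonpos_left (hineq t ht) (le_of_lt hpneg)
    have h2 : 0 < σ t ^ (p - 1) := Real.rpow_pos_of_pos hσ _
    have h3 : p * σ' t * σ t ^ (p-1) ≥ p * (-α * t * σ t ^ (θ / (1 - θ))) * σ t ^ (p-1) :=
      mul_le_mul_of_nonneg_right h1 h2.le
    have h4 : p * (-α * t * σ t ^ (θ / (1 - θ))) * σ t ^ (p-1) = c * t := by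
      rw [hc]
      have : p * (-α * t * σ t ^ (θ / (1 - θ))) * σ t ^ (p-1)
          = -p * α * t * (σ t ^ (θ / (1 - θ)) * σ t ^ (p - 1)) := by ring
      rw [this, hkey]; ring
    nlinarith [h3, h4]
  have hmono : MonotoneOn h (Set.Ici t') := by
    apply monotoneOn_of_deriv_nonneg (convex_Ici t')
    · intro t ht
      exact (hdh t ht).continuousAt.continuousWithinAt
    · intro t ht
      rw [interior_Ici] at ht
      exact (hdh t (le_of_lt ht)).differentiableAt.differentiableWithinAt
    · intro t ht
      rw [interior_Ici] at ht
      rw [(hdh t ht.le).deriv]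
      exact hderiv_nonneg t ht.le
  have hgrow : ∀ t ≥ t', g t' + c/2 * (t^2 - t'^2) ≤ g t := by
    intro t ht
    have := hmono (Set.self_mem_Ici) (Set.mem_Ici.2 ht) ht
    simp only [hh] at this
    linarith
  refine ⟨min (c/4) (g t' / (4 * t'^2)), ?_, g t' / 2, ?_, ?_⟩
  · exact lt_min (by linarith) (div_pos (hgpos t' le_rfl) (by positivity))
  · exact half_pos (hgpos t' le_rfl)
  · intro t ht
    have htpos : 0 < t := lt_of_lt_of_le ht' ht
    have ht2 : t'^2 ≤ t^2 := by nlinarith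
    set a₃ : ℝ := min (c/4) (g t' / (4 * t'^2)) with ha3
    have hbound : a₃ * t^2 + g t' / 2 ≤ g t := by
      rcases le_or_gt (t^2) (2 * t'^2) with hcase | hcase
      · have h1 : a₃ * t^2 ≤ (g t' / (4 * t'^2)) * (2 * t'^2) := by
          have := min_le_right (c/4) (g t' / (4 * t'^2))
          have hge : (0:ℝ) ≤ g t' / (4 * t'^2) := le_of_lt (div_pos (hgpos t' le_rfl) (by positivity))
          nlinarith [sq_nonneg t]
        have h2 : (g t' / (4 * t'^2)) * (2 * t'^2) = g t' / 2 := by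
          field_simp; ring
        have h3 : g t' ≤ g t := by
          have := hgrow t ht
          nlinarith
        nlinarith
      · have h1 : a₃ * t^2 ≤ c/4 * t^2 := by
          have := min_le_left (c/4) (g t' / (4 * t'^2))
          nlinarith [sq_nonneg t]
        have h2 : c/4 * t^2 ≤ c/2 * (t^2 - t'^2) := by nlinarith
        have := hgrow t ht
        have h4 : g t' / 2 ≤ g t' := by linarith [hgpos t' le_rfl]
        nlinarith
    have hapos : 0 < a₃ * t^2 + g t' / 2 := by
      have : 0 < a₃ := lt_min (by linarith) (div_pos (hgpos t' le_rfl) (by positivity))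
      nlinarith [half_pos (hgpos t' le_rfl)]
    have hq : -((1 - θ) / (2 * θ - 1)) = 1 / p := by
      have h21 : (1:ℝ) - 2*θ = -(2*θ-1) := by ring
      rw [hp, one_div_div, h21, div_neg]
    rw [hq]
    have hqneg : 1/p ≤ 0 := (one_div_neg.2 hpneg).le
    have hstep : (g t) ^ (1/p) ≤ (a₃ * t^2 + g t' / 2) ^ (1/p) :=
      Real.rpow_le_rpow_of_nonpos hapos hbound hqneg
    calc σ t = (g t) ^ (1/p) := by
          rw [hg, ← Real.rpow_mul (hpos t ht).le, mul_one_div_cancel hpne,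
            Real.rpow_one]
      _ ≤ _ := hstep
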